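/- Let G be an unmixed finite simple graph with a τ-reduction G₁, …, G_s in which some Gᵢ is a single edge {x, x′}. Then {x, x′} has property (P): for every pair of edges {x, z} and {x′, z′} of G, the pair {z, z′} is an edge of G. -/

import Mathlib

/-- A subset `C` of vertices is a vertex cover of `G` if it meets every edge. -/
def IsVertexCover {V : Type*} (G : SimpleGraph V) (C : Finset V) : Prop :=
  ∀ ⦃a b : V⦄, G.Adj a b → a ∈ C ∨ b ∈ C

/-- A subset `F` of vertices is a stable (independent) set of `G` if it contains no edge. -/
def IsStableSet {V : Type*} (G : SimpleGraph V) (F : Finset V) : Prop :=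
  ∀ ⦃a b : V⦄, a ∈ F → b ∈ F → ¬ G.Adj a b

/-- A minimal vertex cover. -/
def IsMinimalVertexCover {V : Type*} (G : SimpleGraph V) (C : Finset V) : Prop :=
  IsVertexCover G C ∧ ∀ C' : Finset V, C' ⊂ C → ¬ IsVertexCover G C'

/-- The cover number `τ(G)`: minimum cardinality of a vertex cover. -/
noncomputable def coverNumber {V : Type*} [Fintype V] (G : SimpleGraph V) : ℕ :=
  sInf {k | ∃ C : Finset V, IsVertexCover G C ∧ C.card = k}

/-- If `G` is unmixed, with a τ-reduction one of whose parts is a single edge `{x, x′}`,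
then the edge `{x, x′}` has property (P). -/
theorem propertyP_of_edge_in_tauReduction {V : Type*} [Fintype V] [DecidableEq V]
    (G : SimpleGraph V) {s : ℕ} (P : Fin s → Finset V)
    (hdisj : ∀ i j : Fin s, i ≠ j → Disjoint (P i) (P j))
    (hcover : Finset.univ.biUnion P = Finset.univ)
    (hτ : coverNumber G = ∑ i : Fin s, coverNumber (G.induce (P i : Set V)))
    (hunmixed : ∀ C : Finset V, IsMinimalVertexCover G C → C.card = coverNumber G)
    (i₀ : Fin s) (x x' : V) (hP : P i₀ = {x, x'}) (hxx' : G.Adj x x') :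
    ∀ z z' : V, G.Adj x z → G.Adj x' z' → G.Adj z z' := by
  intro z z' hxz hx'z'
  classical
  by_cases hzx' : z = x'
  · subst hzx'; exact hx'z'
  by_cases hz'x : z' = x
  · subst hz'x; exact hxz.symm
  by_contra hzz'
  have hxne : x ≠ x' := hxx'.ne
  -- a stable seed {z, z'}
  have hS₀stable : IsStableSet G ({z, z'} : Finset V) := by
    intro a b ha hb hab
    simp only [Finset.mem_insert, Finset.mem_singleton] at ha hb
    rcases ha with rfl | rfl <;> rcases hb with rfl | rfl
    · exact hab.ne rfl
    · exact hzz' hab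
    · exact hzz' hab.symm
    · exact hab.ne rfl
  -- a maximal stable superset F
  obtain ⟨F, hF, hFmax⟩ : ∃ F ∈ (Finset.univ.filter fun F => IsStableSet G F ∧ ({z, z'} : Finset V) ⊆ F),
      ∀ F' ∈ (Finset.univ.filter fun F => IsStableSet G F ∧ ({z, z'} : Finset V) ⊆ F), ¬ F < F' := by
    obtain ⟨m, hm⟩ := Finset.exists_maximal
      (s := Finset.univ.filter fun F => IsStableSet G F ∧ ({z, z'} : Finset V) ⊆ F)
      ⟨{z, z'}, by simp [hS₀stable]⟩
    exact ⟨m, hm.prop, fun F' hF' hlt => hlt.not_ge (hm.2 hF' hlt.le)⟩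
  simp only [Finset.mem_filter, Finset.mem_univ, true_and] at hF
  obtain ⟨hFstable, hS₀F⟩ := hF
  have hz_mem : z ∈ F := hS₀F (by simp)
  have hz'_mem : z' ∈ F := hS₀F (by simp)
  -- every vertex outside F has a neighbor inside F
  have hnb : ∀ v ∉ F, ∃ u ∈ F, G.Adj v u := by
    intro v hv
    by_contra h
    push_neg at h
    have hst : IsStableSet G (insert v F) := by
      intro a b ha hb hab
      rcases Finset.mem_insert.1 ha with ha' | ha' <;>
        rcases Finset.mem_insert.1 hb with hb' | hb'
      · exact hab.ne (ha'.trans hb'.symm)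
      · exact h b hb' (ha' ▸ hab)
      · exact h a ha' (hb' ▸ hab.symm)
      · exact hFstable ha' hb' hab
    exact hFmax (insert v F)
      (by simp only [Finset.mem_filter, Finset.mem_univ, true_and]
          exact ⟨hst, hS₀F.trans (Finset.subset_insert _ _)⟩)
      (Finset.ssubset_insert hv)
  set C : Finset V := Fᶜ with hCdef
  have hCcover : IsVertexCover G C := by
    intro a b hab
    by_contra h
    push_neg at h
    have ha : a ∈ F := by
      have := h.1; rw [hCdef, Finset.mem_compl, not_not] at this; exact this
    have hb : b ∈ F := by
      have := h.2; rw [hCdef, Finset.mem_compl, not_not] at this; exact this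
    exact hFstable ha hb hab
  have hCmin : IsMinimalVertexCover G C := by
    refine ⟨hCcover, ?_⟩
    intro C' hC' hC'cover
    obtain ⟨v, hvC, hvC'⟩ := Finset.exists_of_ssubset hC'
    have hvF : v ∉ F := Finset.mem_compl.1 hvC
    obtain ⟨u, huF, hadj⟩ := hnb v hvF
    rcases hC'cover hadj with h | h
    · exact hvC' h
    · exact (Finset.mem_compl.1 (hC'.subset h)) huF
  have hCcard : C.card = coverNumber G := hunmixed C hCmin
  -- decompose |C| along the partition
  have hsum : C.card = ∑ i : Fin s, (P i ∩ C).card := by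
    have hd : ∀ i ∈ Finset.univ, ∀ j ∈ Finset.univ, i ≠ j →
        Disjoint (P i ∩ C) (P j ∩ C) := fun i _ j _ hij =>
      (hdisj i j hij).mono Finset.inter_subset_left Finset.inter_subset_left
    rw [← Finset.card_biUnion hd]
    congr 1
    ext v
    simp only [Finset.mem_biUnion, Finset.mem_inter, Finset.mem_univ, true_and]
    constructor
    · intro hv
      have hvu : v ∈ Finset.univ.biUnion P := by rw [hcover]; exact Finset.mem_univ v
      obtain ⟨i, _, hi⟩ := Finset.mem_biUnion.1 hvu
      exact ⟨i, hi, hv⟩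
    · rintro ⟨i, _, hv⟩; exact hv
  have hxC : x ∈ C := Finset.mem_compl.2 (fun hx => hFstable hx hz_mem hxz)
  have hx'C : x' ∈ C := Finset.mem_compl.2 (fun hx => hFstable hx hz'_mem hx'z')
  have hi₀card : (P i₀ ∩ C).card = 2 := by
    have heq : P i₀ ∩ C = {x, x'} := by
      rw [hP]
      apply Finset.inter_eq_left.2
      intro v hv
      rcases Finset.mem_insert.1 hv with rfl | hv
      · exact hxC
      · rw [Finset.mem_singleton.1 hv]; exact hx'C
    rw [heq, Finset.card_insert_of_notMem (by simp [hxne]), Finset.card_singleton]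
  -- each C ∩ P i covers the induced graph
  have hle : ∀ i : Fin s,
      coverNumber (G.induce (P i : Set V)) ≤ (P i ∩ C).card := by
    intro i
    set D : Finset (P i : Set V) := Finset.univ.filter (fun v => (v : V) ∈ C) with hDdef
    have hDcov : IsVertexCover (G.induce (P i : Set V)) D := by
      intro a b hab
      have hab' : G.Adj (a : V) (b : V) := hab
      rcases hCcover hab' with h | h
      · left; simp [hDdef, h]
      · right; simp [hDdef, h]
    have hDcard : D.card ≤ (P i ∩ C).card := by
      refine Finset.card_le_card_of_injOn (fun v => (v : V)) ?_ Subtype.val_injective.injOn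
      intro v hv
      simp only [hDdef, Finset.coe_filter, Finset.mem_univ, true_and, Set.mem_setOf_eq] at hv
      exact Finset.mem_inter.2 ⟨by exact_mod_cast v.2, hv⟩
    calc coverNumber (G.induce (P i : Set V)) ≤ D.card :=
          Nat.sInf_le ⟨D, hDcov, rfl⟩
      _ ≤ (P i ∩ C).card := hDcard
  -- but the induced graph on {x, x'} is covered by {x} alone
  have hxmem : x ∈ (P i₀ : Set V) := by rw [hP]; simp
  have hi₀le : coverNumber (G.induce (P i₀ : Set V)) ≤ 1 := by
    have hDcov : IsVertexCover (G.induce (P i₀ : Set V)) {⟨x, hxmem⟩} := by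
      intro a b hab
      have hab' : G.Adj (a : V) (b : V) := hab
      have ha : (a : V) ∈ ({x, x'} : Finset V) := by rw [← hP]; exact_mod_cast a.2
      have hb : (b : V) ∈ ({x, x'} : Finset V) := by rw [← hP]; exact_mod_cast b.2
      rcases Finset.mem_insert.1 ha with ha1 | ha1
      · left; exact Finset.mem_singleton.2 (Subtype.ext ha1)
      · rcases Finset.mem_insert.1 hb with hb1 | hb1
        · right; exact Finset.mem_singleton.2 (Subtype.ext hb1)
        · exact absurd ((Finset.mem_singleton.1 ha1).trans
            (Finset.mem_singleton.1 hb1).symm) hab'.ne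
    have hmem : (1 : ℕ) ∈ {k | ∃ D : Finset (P i₀ : Set V),
        IsVertexCover (G.induce (P i₀ : Set V)) D ∧ D.card = k} :=
      ⟨{⟨x, hxmem⟩}, hDcov, by simp⟩
    exact Nat.sInf_le hmem
  have hlt : ∑ i : Fin s, coverNumber (G.induce (P i : Set V)) <
      ∑ i : Fin s, (P i ∩ C).card :=
    Finset.sum_lt_sum (fun i _ => hle i)
      ⟨i₀, Finset.mem_univ _, by rw [hi₀card]; omega⟩
  omega
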